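/- Let p be a prime, d ≥ 1 a natural number, k_1, …, k_d integers, and m a natural number. Let U_a be the (2d)×(2d) complex block-diagonal matrix over the index type Fin d × Fin 2 whose i-th 2×2 diagonal block is R_y(2πk_i/p), and let v = (1/√d) · Σ_{i ∈ Fin d} e_{(i,0)} (the uniform superposition over the blocks with target component e_0; this is the state produced by applying Hadamard gates to the control qubits of the all-zero state). Then the inner product ⟨v, U_a^m v⟩ equals (1/d) · Σ_{i=1}^{d} cos(2πk_i m/p). In particular, if p divides m this amplitude equals 1, so the QFA M_K accepts every member of MOD_p with probability 1, and in general M_K accepts a^m with probability ((1/d) · Σ_{i=1}^{d} cos(2πk_i m/p))². -/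

import Mathlib

open Matrix

/-- `R_y(θ)`: the 2×2 rotation matrix `[[cos θ, −sin θ], [sin θ, cos θ]]` viewed over `ℂ`. -/
noncomputable def Ry (θ : ℝ) : Matrix (Fin 2) (Fin 2) ℂ :=
  !![(Real.cos θ : ℂ), -(Real.sin θ : ℂ); (Real.sin θ : ℂ), (Real.cos θ : ℂ)]

/-- Block-diagonal matrix over the index type `Fin d × Fin 2` whose `i`-th
2×2 diagonal block is `A i`. -/
def bdiag (d : ℕ) (A : Fin d → Matrix (Fin 2) (Fin 2) ℂ) :
    Matrix (Fin d × Fin 2) (Fin d × Fin 2) ℂ :=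
  Matrix.of fun x y => if x.1 = y.1 then A x.1 x.2 y.2 else 0

lemma Ry_mul (θ φ : ℝ) : Ry θ * Ry φ = Ry (θ + φ) := by
  ext i j
  fin_cases i <;> fin_cases j <;>
    simp [Ry, Matrix.mul_apply, Fin.sum_univ_two, Real.cos_add, Real.sin_add] <;>
    push_cast <;> ring

lemma Ry_pow (θ : ℝ) (m : ℕ) : Ry θ ^ m = Ry (m * θ) := by
  induction m with
  | zero =>
    ext i j; fin_cases i <;> fin_cases j <;> simp [Ry]
  | succ n ih =>
    rw [pow_succ, ih, Ry_mul]
    congr 1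
    push_cast
    ring

lemma bdiag_mul (d : ℕ) (A B : Fin d → Matrix (Fin 2) (Fin 2) ℂ) :
    bdiag d A * bdiag d B = bdiag d (fun i => A i * B i) := by
  ext x y
  simp only [bdiag, Matrix.mul_apply, Matrix.of_apply, Fintype.sum_prod_type]
  rw [Finset.sum_eq_single x.1]
  · by_cases h : x.1 = y.1 <;> simp [h, Matrix.mul_apply]
  · intro b _ hb; simp [Ne.symm hb]
  · simp

lemma bdiag_pow (d : ℕ) (A : Fin d → Matrix (Fin 2) (Fin 2) ℂ) (m : ℕ) :
    bdiag d A ^ m = bdiag d (fun i => A i ^ m) := by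
  induction m with
  | zero =>
    ext x y
    simp [bdiag, Matrix.one_apply, Prod.ext_iff]
    by_cases h : x.1 = y.1 <;> simp [h]
  | succ n ih => rw [pow_succ, ih, bdiag_mul]; rfl

/-- Let `U_a` be the block-diagonal matrix with blocks `R_y(2πk_i/p)` and let
`v = (1/√d)·Σ_i e_{(i,0)}` be the uniform superposition over the blocks with
target component `e₀`.  Then `⟨v, U_a^m v⟩ = (1/d)·Σ_i cos(2πk_i m/p)`;
in particular this amplitude is `1` when `p ∣ m`, and the QFA `M_K` accepts
`a^m` with probability `((1/d)·Σ_i cos(2πk_i m/p))²`. -/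
theorem qfa_parallel_acceptance (p : ℕ) (hp : p.Prime) (d : ℕ) (hd : 1 ≤ d)
    (k : Fin d → ℤ) (m : ℕ) :
    let Ua : Matrix (Fin d × Fin 2) (Fin d × Fin 2) ℂ :=
      bdiag d fun i => Ry (2 * Real.pi * (k i) / p)
    let v : Fin d × Fin 2 → ℂ := fun x => if x.2 = 0 then ((1 / Real.sqrt d : ℝ) : ℂ) else 0
    dotProduct (star v) ((Ua ^ m).mulVec v)
        = (((1 / (d : ℝ)) * ∑ i : Fin d, Real.cos (2 * Real.pi * (k i) * m / p) : ℝ) : ℂ) ∧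
    ((p ∣ m) → dotProduct (star v) ((Ua ^ m).mulVec v) = 1) ∧
    ‖dotProduct (star v) ((Ua ^ m).mulVec v)‖ ^ 2
        = ((1 / (d : ℝ)) * ∑ i : Fin d, Real.cos (2 * Real.pi * (k i) * m / p)) ^ 2 := by
  intro Ua v
  have hd0 : (d : ℝ) ≠ 0 := by positivity
  have hp0 : (p : ℝ) ≠ 0 := by exact_mod_cast hp.ne_zero
  have key : dotProduct (star v) ((Ua ^ m).mulVec v)
      = (((1 / (d : ℝ)) * ∑ i : Fin d, Real.cos (2 * Real.pi * (k i) * m / p) : ℝ) : ℂ) := by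
    have hRy : ∀ i : Fin d, Ry (2 * Real.pi * (k i) / p) ^ m
        = Ry (2 * Real.pi * (k i) * m / p) := by
      intro i
      rw [Ry_pow]
      congr 1
      field_simp
    have hUa : Ua ^ m = bdiag d (fun i => Ry (2 * Real.pi * (k i) * m / p)) := by
      show bdiag d _ ^ m = _
      rw [bdiag_pow]; simp only [hRy]
    rw [hUa]
    simp only [dotProduct, mulVec, dotProduct, Fintype.sum_prod_type, Pi.star_apply, bdiag,
      Matrix.of_apply, Fin.sum_univ_two, v]
    simp only [if_true, if_neg (by decide : ¬(1 : Fin 2) = 0), apply_ite star, star_zero,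
      mul_zero, add_zero, mul_ite, zero_mul, ite_mul, Ry]
    have hs : ((1 / Real.sqrt d : ℝ) : ℂ) * ((1 / Real.sqrt d : ℝ) : ℂ) = ((1 / d : ℝ) : ℂ) := by
      rw [← Complex.ofReal_mul]
      congr 1
      rw [div_mul_div_comm, one_mul, Real.mul_self_sqrt (by positivity)]
    simp only [Finset.sum_ite_eq, Finset.mem_univ, if_true, Matrix.cons_val', Matrix.cons_val_zero,
      Matrix.head_cons, Matrix.empty_val', Matrix.cons_val_fin_one, Complex.star_def,
      Complex.conj_ofReal]
    rw [Complex.ofReal_mul, Complex.ofReal_sum, Finset.mul_sum]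
    refine Finset.sum_congr rfl fun x _ => ?_
    simp only [Matrix.cons_val', Matrix.cons_val_zero, Matrix.empty_val',
      Matrix.cons_val_fin_one, Matrix.of_apply, Matrix.head_cons]
    rw [show ((1 / Real.sqrt d : ℝ) : ℂ) *
        (((Real.cos (2 * Real.pi * (k x) * m / p)) : ℂ) * ((1 / Real.sqrt d : ℝ) : ℂ))
        = (((1 / Real.sqrt d : ℝ) : ℂ) * ((1 / Real.sqrt d : ℝ) : ℂ)) *
          ((Real.cos (2 * Real.pi * (k x) * m / p)) : ℂ) from by ring, hs]
  refine ⟨key, ?_, ?_⟩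
  · intro hdvd
    obtain ⟨t, ht⟩ := hdvd
    rw [key]
    have : ∀ i : Fin d, Real.cos (2 * Real.pi * (k i) * m / p) = 1 := by
      intro i
      have : (2 : ℝ) * Real.pi * (k i) * m / p = ((k i * t : ℤ) : ℝ) * (2 * Real.pi) := by
        subst ht; push_cast; field_simp
      rw [this, Real.cos_int_mul_two_pi]
    simp [this, hd0]
  · rw [key, Complex.norm_real, Real.norm_eq_abs, sq_abs]
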